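/- For real numbers a, b ≥ 0 with b ≠ 0, one has (1/3)·min{|a²−b²|/b, √|a²−b²|} ≤ |a−b| ≤ min{|a²−b²|/b, √|a²−b²|}. -/
import Mathlib


theorem a2b2_ab_comparison (a b : ℝ) (ha : 0 ≤ a) (hb : 0 ≤ b) (hb0 : b ≠ 0) :
    (1 / 3) * min (|a ^ 2 - b ^ 2| / b) (Real.sqrt |a ^ 2 - b ^ 2|) ≤ |a - b| ∧
      |a - b| ≤ min (|a ^ 2 - b ^ 2| / b) (Real.sqrt |a ^ 2 - b ^ 2|) := by
  have hb' : 0 < b := lt_of_le_of_ne hb (Ne.symm hb0)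
  have hab : (0:ℝ) ≤ a + b := by linarith
  have key : |a ^ 2 - b ^ 2| = |a - b| * (a + b) := by
    rw [show a ^ 2 - b ^ 2 = (a - b) * (a + b) by ring, abs_mul, abs_of_nonneg hab]
  have habs : |a - b| ≤ a + b := by
    rcases abs_cases (a - b) with ⟨h1, _⟩ | ⟨h1, _⟩ <;> linarith
  constructor
  · rcases le_or_gt a (2 * b) with h | h
    · refine le_trans (mul_le_mul_of_nonneg_left (min_le_left _ _) (by norm_num)) ?_
      rw [key, mul_div_assoc', div_le_iff₀ hb']
      nlinarith [abs_nonneg (a - b)]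
    · refine le_trans (mul_le_mul_of_nonneg_left (min_le_right _ _) (by norm_num)) ?_
      have h1 : Real.sqrt |a ^ 2 - b ^ 2| ≤ Real.sqrt ((3 * |a - b|) ^ 2) := by
        apply Real.sqrt_le_sqrt
        rw [key, mul_pow, sq_abs]
        nlinarith
      rw [Real.sqrt_sq (by positivity)] at h1
      linarith
  · refine le_min ?_ ?_
    · rw [key, le_div_iff₀ hb']
      nlinarith [abs_nonneg (a - b)]
    · rw [key, Real.le_sqrt (abs_nonneg _)]
      nlinarith [abs_nonneg (a - b)]
      positivity
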